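/- Let G be an mDAG with vertex set V ∪ U1 ∪ U2, and H = p(G, V ∪ U1). For vertices a, b ∈ V, there is a directed path from a to b in G with all non-endpoint vertices in U1 ∪ U2 if and only if there is a directed path from a to b in H with all non-endpoint vertices in U1. -/

import Mathlib

/-- An mDAG: an acyclic directed graph together with an abstract simplicial complex of
bidirected faces (all faces nonempty, all singletons present, closed under nonempty subsets). -/
structure MDAG (W : Type) where
  Edge : W → W → Prop
  Faces : Set (Set W)
  acyclic : ∀ w, ¬ Relation.TransGen Edge w w
  singleton_mem : ∀ w : W, {w} ∈ Faces
  nonempty_of_mem : ∀ B ∈ Faces, B.Nonempty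
  down_closed : ∀ A B : Set W, A ⊆ B → A.Nonempty → B ∈ Faces → A ∈ Faces

/-- `projEdge Edge U a b`: there is a directed path from `a` to `b` (of length ≥ 1) with all
non-endpoint vertices in `U`.  This is the directed-edge relation of the latent projection
that projects out `U`. -/
def projEdge {W : Type} (Edge : W → W → Prop) (U : Set W) (a b : W) : Prop :=
  ∃ c, Relation.ReflTransGen (fun x y => Edge x y ∧ y ∈ U) a c ∧ Edge c b

/-- `hcc Edge Faces U S`: the vertices of `S` share a hidden common cause with respect to `U`:
there is a bidirected face `B ⊆ U ∪ S` such that every `w ∈ S` is reached from some `b ∈ B`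
by a directed path all of whose vertices lie in `U ∪ {w}`. -/
def hcc {W : Type} (Edge : W → W → Prop) (Faces : Set (Set W)) (U : Set W) (S : Set W) : Prop :=
  ∃ B ∈ Faces, B ⊆ U ∪ S ∧
    ∀ w ∈ S, ∃ b ∈ B, Relation.ReflTransGen (fun x y => Edge x y ∧ x ∈ U) b w

/-- Let `G` be an mDAG with vertices `V ∪ U₁ ∪ U₂` and `H = p(G, V ∪ U₁)` its latent
projection (so the edge relation of `H` is `projEdge G.Edge U₂`).  For observed `a, b ∈ V`,
there is a directed path from `a` to `b` in `G` with all non-endpoints in `U₁ ∪ U₂` iff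
there is a directed path from `a` to `b` in `H` with all non-endpoints in `U₁`. -/
theorem stmt13 {W : Type} [Fintype W] (G : MDAG W) (U1 U2 : Set W) (hdisj : Disjoint U1 U2)
    (a b : W) (ha : a ∉ U1 ∪ U2) (hb : b ∉ U1 ∪ U2) :
    projEdge G.Edge (U1 ∪ U2) a b ↔ projEdge (projEdge G.Edge U2) U1 a b := by

  constructor
  · rintro ⟨c, hac, hcb⟩
    -- strengthen: along RTG, maintain ∃ d, RTG PE1 a d ∧ RTG R2 d c
    have key : ∀ c, Relation.ReflTransGen (fun x y => G.Edge x y ∧ y ∈ U1 ∪ U2) a c →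
        ∃ d, Relation.ReflTransGen (fun x y => projEdge G.Edge U2 x y ∧ y ∈ U1) a d ∧
          Relation.ReflTransGen (fun x y => G.Edge x y ∧ y ∈ U2) d c := by
      intro c hc
      induction hc with
      | refl => exact ⟨a, Relation.ReflTransGen.refl, Relation.ReflTransGen.refl⟩
      | tail hxy h ih =>
        obtain ⟨d, had, hdx⟩ := ih
        obtain ⟨he, hmem⟩ := h
        rcases hmem with h1 | h2
        · exact ⟨_, had.tail ⟨⟨_, hdx, he⟩, h1⟩, Relation.ReflTransGen.refl⟩
        · exact ⟨d, had, hdx.tail ⟨he, h2⟩⟩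
    obtain ⟨d, had, hdc⟩ := key c hac
    exact ⟨d, had, c, hdc, hcb⟩
  · rintro ⟨c, hac, hcb⟩
    have mono : ∀ x y, Relation.ReflTransGen (fun x y => G.Edge x y ∧ y ∈ U2) x y →
        Relation.ReflTransGen (fun x y => G.Edge x y ∧ y ∈ U1 ∪ U2) x y := by
      intro x y h
      exact Relation.ReflTransGen.mono (fun u v (⟨he, hm⟩ : G.Edge u v ∧ v ∈ U2) => (⟨he, Or.inr hm⟩ : G.Edge u v ∧ v ∈ U1 ∪ U2)) x y h
    have lift : Relation.ReflTransGen (fun x y => G.Edge x y ∧ y ∈ U1 ∪ U2) a c := by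
      clear hcb
      induction hac with
      | refl => exact Relation.ReflTransGen.refl
      | tail hxy h ih =>
        obtain ⟨⟨e, hxe, heb⟩, hmem⟩ := h
        exact (ih.trans (mono _ _ hxe)).tail ⟨heb, Or.inl hmem⟩
    obtain ⟨e, hce, heb⟩ := hcb
    exact ⟨e, lift.trans (mono _ _ hce), heb⟩
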